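/- arXiv:1405.1193 — 2 statements merged into one kernel-verified Lean document; each statement's English description precedes it below -/
import Mathlib

section
/- Let κ be a regular cardinal and μ a (κ,κ⁺)-cardinal. Then for every X ∈ μ, the set {rank(Z) : Z ∈ μ, X ⊆ Z} equals the interval [rank(X), ht(μ)), where ht(μ) is the height of the well-founded order (μ,⊂). Moreover, if X ⊆ Y are both in μ, then {rank(Z) : Z ∈ μ, X ⊆ Z ⊆ Y} = [rank(X), rank(Y)]. -/
open Set Cardinal Ordinal

noncomputable section

/-- Lower a (small) ordinal of `Ordinal.{1}` to `Ordinal.{0}` (the inverse of `Ordinal.lift`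
on its range). -/
noncomputable def olower (o : Ordinal.{1}) : Ordinal.{0} :=
  sInf {a : Ordinal.{0} | Ordinal.lift.{1} a = o}

/-- The order type of a set of ordinals. -/
noncomputable def otp (A : Set Ordinal.{0}) : Ordinal.{0} :=
  olower (Ordinal.type (Subrel ((· < ·) : Ordinal → Ordinal → Prop) (· ∈ A)))

/-- The canonical order-preserving transfer map from a set of ordinals `X` to a set of
ordinals `Y` of the same order type: an element `a ∈ X` is sent to the unique element of `Y`
occupying the same position. -/
noncomputable def omap (X Y : Set Ordinal) (a : Ordinal) : Ordinal :=
  sInf {b | b ∈ Y ∧ otp (Y ∩ Set.Iio b) = otp (X ∩ Set.Iio a)}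

/-- `IsStar X₁ X₂ X` says `X = X₁ * X₂`: `X₁` and `X₂` have the same order type,
`X = X₁ ∪ X₂`, and `X₁ ∩ X₂ < X₁ \ X₂ < X₂ \ X₁` elementwise. -/
def IsStar (X₁ X₂ X : Set Ordinal) : Prop :=
  otp X₁ = otp X₂ ∧ X = X₁ ∪ X₂ ∧
  (∀ a ∈ X₁ ∩ X₂, ∀ b ∈ X₁ \ X₂, a < b) ∧
  (∀ b ∈ X₁ \ X₂, ∀ c ∈ X₂ \ X₁, b < c)

set_option linter.deprecated false in
/-- A `(κ,κ⁺)`-cardinal (a neat simplified `(κ,1)`-morass presented as a family of sets):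
a family `μ ⊆ ℘_κ(κ⁺)` which is well-founded under strict inclusion, locally small,
homogeneous, directed, locally almost directed, covers `κ⁺` and is neat. -/
structure TwoCardinal (κ : Cardinal.{0}) where
  mu : Set (Set Ordinal)
  mem_sub : ∀ X ∈ mu, X ⊆ Set.Iio (Order.succ κ).ord
  mem_small : ∀ X ∈ mu, (otp X).card < κ
  wf : WellFounded fun X Y : mu => (X : Set Ordinal) ⊂ (Y : Set Ordinal)
  locSmall : ∀ X : mu,
    #{Z : mu // (Z : Set Ordinal) ⊂ (X : Set Ordinal)} < Cardinal.lift.{1} κ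
  homog : ∀ X Y : mu, (wf.apply X).rank = (wf.apply Y).rank →
    otp (X : Set Ordinal) = otp (Y : Set Ordinal) ∧
    {Z | Z ∈ mu ∧ Z ⊂ (Y : Set Ordinal)} =
      (fun Z => omap (X : Set Ordinal) (Y : Set Ordinal) '' Z) ''
        {Z | Z ∈ mu ∧ Z ⊂ (X : Set Ordinal)}
  directed : ∀ X ∈ mu, ∀ Y ∈ mu, ∃ Z ∈ mu, X ⊆ Z ∧ Y ⊆ Z
  locAlmostDirected : ∀ X : mu,
    (∀ Z₁ ∈ mu, ∀ Z₂ ∈ mu, Z₁ ⊂ (X : Set Ordinal) → Z₂ ⊂ (X : Set Ordinal) →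
      ∃ Z ∈ mu, Z ⊂ (X : Set Ordinal) ∧ Z₁ ⊆ Z ∧ Z₂ ⊆ Z) ∨
    (∃ X₁ X₂ : mu, (wf.apply X₁).rank = (wf.apply X₂).rank ∧
      IsStar (X₁ : Set Ordinal) (X₂ : Set Ordinal) (X : Set Ordinal) ∧
      {Z | Z ∈ mu ∧ Z ⊂ (X : Set Ordinal)} =
        {Z | Z ∈ mu ∧ Z ⊂ (X₁ : Set Ordinal)} ∪ {Z | Z ∈ mu ∧ Z ⊂ (X₂ : Set Ordinal)} ∪
          {(X₁ : Set Ordinal), (X₂ : Set Ordinal)})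
  covers : ⋃₀ mu = Set.Iio (Order.succ κ).ord
  neat : ∀ X : mu, (wf.apply X).rank ≠ 0 →
    (X : Set Ordinal) = ⋃₀ {Z | Z ∈ mu ∧ Z ⊂ (X : Set Ordinal)}

namespace TwoCardinal

variable {κ : Cardinal} (M : TwoCardinal κ)

set_option linter.deprecated false in
/-- The rank of an element of `μ` in the well-founded order `(μ, ⊂)`. -/
noncomputable def rank (X : M.mu) : Ordinal := olower ((M.wf.apply X).rank)

/-- The height of the well-founded order `(μ, ⊂)`. -/
noncomputable def ht : Ordinal := sSup (Set.range fun X : M.mu => M.rank X + 1)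

/-- The term `μ_ξ(α)` of the μ-sequence at `α`: equal to `X ∩ α` for any `X ∈ μ` of
rank `ξ` containing `α` (this is independent of the choice of `X`). -/
noncomputable def seq (α ξ : Ordinal) : Set Ordinal :=
  ⋃₀ {S | ∃ X : M.mu, M.rank X = ξ ∧ α ∈ (X : Set Ordinal) ∧
    S = (X : Set Ordinal) ∩ Set.Iio α}

/-- The μ-coloring `m(α,β) = min{rank X : α, β ∈ X ∈ μ}`. -/
noncomputable def mcol (a b : Ordinal) : Ordinal :=
  sInf {ξ | ∃ X : M.mu, M.rank X = ξ ∧ a ∈ (X : Set Ordinal) ∧ b ∈ (X : Set Ordinal)}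

end TwoCardinal

section DensityAux

set_option linter.deprecated false

theorem olift_lt_univ (a : Ordinal.{0}) : Ordinal.lift.{1} a < Ordinal.univ.{0, 1} := by
  have := Ordinal.liftPrincipalSeg.{0, 1}.lt_top a
  rwa [Ordinal.liftPrincipalSeg_coe, Ordinal.liftPrincipalSeg_top] at this

theorem olift_mem_range {o : Ordinal.{1}} (h : o < Ordinal.univ.{0, 1}) :
    ∃ a : Ordinal.{0}, Ordinal.lift.{1} a = o := by
  have := Ordinal.liftPrincipalSeg.{0, 1}.mem_range_of_rel_top
    (b := o) (by rwa [Ordinal.liftPrincipalSeg_top])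
  obtain ⟨a, ha⟩ := this
  exact ⟨a, by rwa [Ordinal.liftPrincipalSeg_coe] at ha⟩

theorem lift_olower {o : Ordinal.{1}} (h : ∃ a : Ordinal.{0}, Ordinal.lift.{1} a = o) :
    Ordinal.lift.{1} (olower o) = o :=
  csInf_mem (s := {a : Ordinal.{0} | Ordinal.lift.{1} a = o}) h

namespace TwoCardinal

variable {κ : Cardinal} (M : TwoCardinal κ)

theorem small_mu : Small.{0} M.mu := by
  have : ∀ X : M.mu, (X : Set Ordinal) ⊆ Set.Iio (Order.succ κ).ord := fun X => M.mem_sub X X.2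
  set g : M.mu → Set (Set.Iio (Order.succ κ).ord) :=
    fun X => {a | (a : Ordinal) ∈ (X : Set Ordinal)} with hg
  have hginj : Function.Injective g := by
    intro X Y hXY
    apply Subtype.ext
    ext a
    constructor
    · intro ha
      have : (⟨a, this X ha⟩ : Set.Iio (Order.succ κ).ord) ∈ g X := ha
      rw [hXY] at this
      exact this
    · intro ha
      have : (⟨a, this Y ha⟩ : Set.Iio (Order.succ κ).ord) ∈ g Y := ha
      rw [← hXY] at this
      exact this
  exact small_of_injective hginj

theorem wfRank_lt_univ (X : M.mu) : (M.wf.apply X).rank < Ordinal.univ.{0, 1} := by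
  induction X using M.wf.induction with
  | _ Y IH =>
    rw [(M.wf.apply Y).rank_eq]
    apply Ordinal.iSup_lt_ord
    · apply lt_of_lt_of_le (lt_trans (M.locSmall Y) (Cardinal.lift_lt_univ κ))
      rw [← Cardinal.ord_univ]
      rw [Cardinal.ord_univ, Ordinal.cof_univ]
    · intro b
      obtain ⟨a, ha⟩ := olift_mem_range (IH b b.2)
      rw [show ((M.wf.apply Y).inv b.2).rank = (M.wf.apply b.1).rank from rfl, ← ha, ← Ordinal.lift_succ]
      exact olift_lt_univ _

theorem lift_rank (X : M.mu) : Ordinal.lift.{1} (M.rank X) = (M.wf.apply X).rank :=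
  lift_olower (olift_mem_range (M.wfRank_lt_univ X))

theorem rank_lt_rank_iff {X Y : M.mu} : M.rank X < M.rank Y ↔ (M.wf.apply X).rank < (M.wf.apply Y).rank := by
  rw [← M.lift_rank X, ← M.lift_rank Y, Ordinal.lift_lt]

theorem rank_eq_rank_of_wf {X Y : M.mu} (h : (M.wf.apply X).rank = (M.wf.apply Y).rank) :
    M.rank X = M.rank Y := by
  unfold TwoCardinal.rank
  rw [h]

theorem rank_lt_of_ssubset {X Y : M.mu} (h : (X : Set Ordinal) ⊂ (Y : Set Ordinal)) :
    M.rank X < M.rank Y :=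
  M.rank_lt_rank_iff.2 ((M.wf.apply Y).rank_lt_of_rel h)

theorem rank_le_of_subset {X Y : M.mu} (h : (X : Set Ordinal) ⊆ (Y : Set Ordinal)) :
    M.rank X ≤ M.rank Y := by
  rcases h.ssubset_or_eq with h | h
  · exact (M.rank_lt_of_ssubset h).le
  · rw [Subtype.ext h]

theorem exists_rank_ge {Y : M.mu} {ξ : Ordinal} (h : ξ < M.rank Y) :
    ∃ Z : M.mu, (Z : Set Ordinal) ⊂ (Y : Set Ordinal) ∧ ξ ≤ M.rank Z := by
  have h1 : Ordinal.lift.{1} ξ < (M.wf.apply Y).rank := by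
    rw [← M.lift_rank Y, Ordinal.lift_lt]; exact h
  rw [(M.wf.apply Y).rank_eq, Ordinal.lt_iSup_iff] at h1
  obtain ⟨⟨Z, hZ⟩, hlt⟩ := h1
  refine ⟨Z, hZ, ?_⟩
  rw [Order.lt_succ_iff] at hlt
  rw [← Ordinal.lift_le, M.lift_rank]
  exact hlt

theorem dense_aux : ∀ Y X : M.mu, (X : Set Ordinal) ⊆ (Y : Set Ordinal) →
    ∀ ξ, M.rank X ≤ ξ → ξ ≤ M.rank Y →
    ∃ Z : M.mu, (X : Set Ordinal) ⊆ (Z : Set Ordinal) ∧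
      (Z : Set Ordinal) ⊆ (Y : Set Ordinal) ∧ M.rank Z = ξ := by
  intro Y
  induction Y using M.wf.induction with
  | _ Y IH =>
    intro X hXY ξ hξl hξu
    rcases eq_or_lt_of_le hξu with rfl | hξu
    · exact ⟨Y, hXY, subset_rfl, rfl⟩
    obtain ⟨W, hWY, hWξ⟩ := M.exists_rank_ge hξu
    have hXY' : (X : Set Ordinal) ⊂ (Y : Set Ordinal) := by
      rcases hXY.ssubset_or_eq with h | h
      · exact h
      · exfalso
        have : M.rank X = M.rank Y := by rw [Subtype.ext h]
        exact absurd this (ne_of_lt (lt_of_le_of_lt hξl hξu))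
    rcases M.locAlmostDirected Y with hdir | ⟨X₁, X₂, hr12, _hstar, hset⟩
    · obtain ⟨Z', hZ'mu, hZ'Y, hXZ', hWZ'⟩ := hdir X X.2 W W.2 hXY' hWY
      have hξZ' : ξ ≤ M.rank ⟨Z', hZ'mu⟩ :=
        hWξ.trans (M.rank_le_of_subset (X := W) (Y := ⟨Z', hZ'mu⟩) hWZ')
      obtain ⟨Z, h1, h2, h3⟩ := IH ⟨Z', hZ'mu⟩ hZ'Y X hXZ' ξ hξl hξZ'
      exact ⟨Z, h1, h2.trans hZ'Y.subset, h3⟩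
    · have hr12' : M.rank X₁ = M.rank X₂ := M.rank_eq_rank_of_wf hr12
      have hX1Y : (X₁ : Set Ordinal) ⊂ (Y : Set Ordinal) := by
        have : (X₁ : Set Ordinal) ∈ {Z | Z ∈ M.mu ∧ Z ⊂ (Y : Set Ordinal)} := by
          rw [hset]; exact Or.inr (Or.inl rfl)
        exact this.2
      have hX2Y : (X₂ : Set Ordinal) ⊂ (Y : Set Ordinal) := by
        have : (X₂ : Set Ordinal) ∈ {Z | Z ∈ M.mu ∧ Z ⊂ (Y : Set Ordinal)} := by
          rw [hset]; exact Or.inr (Or.inr rfl)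
        exact this.2
      have hbound : ∀ Z : M.mu, (Z : Set Ordinal) ⊂ (Y : Set Ordinal) →
          M.rank Z ≤ M.rank X₁ := by
        intro Z hZ
        have hZm : (Z : Set Ordinal) ∈ {Z | Z ∈ M.mu ∧ Z ⊂ (Y : Set Ordinal)} := ⟨Z.2, hZ⟩
        rw [hset] at hZm
        rcases hZm with (h | h) | h
        · exact (M.rank_lt_of_ssubset h.2).le
        · rw [hr12']; exact (M.rank_lt_of_ssubset h.2).le
        · rcases h with h | h
          · rw [Subtype.ext h]
          · rw [Subtype.ext h, hr12']
      have hξ1 : ξ ≤ M.rank X₁ := hWξ.trans (hbound W hWY)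
      have hX : (X : Set Ordinal) ∈ {Z | Z ∈ M.mu ∧ Z ⊂ (Y : Set Ordinal)} := ⟨X.2, hXY'⟩
      rw [hset] at hX
      rcases hX with (h | h) | h
      · obtain ⟨Z, h1, h2, h3⟩ := IH X₁ hX1Y X h.2.subset ξ hξl hξ1
        exact ⟨Z, h1, h2.trans hX1Y.subset, h3⟩
      · obtain ⟨Z, h1, h2, h3⟩ := IH X₂ hX2Y X h.2.subset ξ hξl (hr12' ▸ hξ1)
        exact ⟨Z, h1, h2.trans hX2Y.subset, h3⟩
      · have hXr : M.rank X = M.rank X₁ := by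
          rcases h with h | h
          · rw [Subtype.ext h]
          · rw [Subtype.ext h, hr12']
        have : ξ = M.rank X := le_antisymm (hξ1.trans_eq hXr.symm) hξl
        exact ⟨X, subset_rfl, hXY, this.symm⟩

theorem bddAbove_rank_succ : BddAbove (Set.range fun X : M.mu => M.rank X + 1) := by
  have : Small.{0} M.mu := M.small_mu
  exact Ordinal.bddAbove_of_small

theorem rank_lt_ht (Z : M.mu) : M.rank Z < M.ht := by
  have h : M.rank Z + 1 ≤ M.ht := le_csSup M.bddAbove_rank_succ ⟨Z, rfl⟩
  exact lt_of_lt_of_le (by rw [Ordinal.add_one_eq_succ]; exact Order.lt_succ _) h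

theorem exists_rank_ge_of_lt_ht {ξ : Ordinal} (h : ξ < M.ht) : ∃ W : M.mu, ξ ≤ M.rank W := by
  by_contra hcon
  push_neg at hcon
  have : M.ht ≤ ξ := by
    apply csSup_le'
    rintro r ⟨W, rfl⟩
    show M.rank W + 1 ≤ ξ
    rw [Ordinal.add_one_eq_succ, Order.succ_le_iff]
    exact hcon W
  exact absurd h (not_lt_of_ge this)

end TwoCardinal

end DensityAux

/-- The density lemma. -/
theorem density_lemma (κ : Cardinal) (hκ : κ.IsRegular) (M : TwoCardinal κ) (X : M.mu) :
    {r | ∃ Z : M.mu, (X : Set Ordinal) ⊆ (Z : Set Ordinal) ∧ M.rank Z = r} =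
      Set.Ico (M.rank X) M.ht ∧
    ∀ Y : M.mu, (X : Set Ordinal) ⊆ (Y : Set Ordinal) →
      {r | ∃ Z : M.mu, (X : Set Ordinal) ⊆ (Z : Set Ordinal) ∧
          (Z : Set Ordinal) ⊆ (Y : Set Ordinal) ∧ M.rank Z = r} =
        Set.Icc (M.rank X) (M.rank Y) := by
  constructor
  · ext r
    simp only [Set.mem_setOf_eq, Set.mem_Ico]
    constructor
    · rintro ⟨Z, hXZ, rfl⟩
      exact ⟨M.rank_le_of_subset hXZ, M.rank_lt_ht Z⟩
    · rintro ⟨h1, h2⟩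
      obtain ⟨W, hW⟩ := M.exists_rank_ge_of_lt_ht h2
      obtain ⟨V, hVmu, hXV, hWV⟩ := M.directed X X.2 W W.2
      have hrV : r ≤ M.rank ⟨V, hVmu⟩ :=
        hW.trans (M.rank_le_of_subset (X := W) (Y := ⟨V, hVmu⟩) hWV)
      obtain ⟨Z, hZ1, _hZ2, hZ3⟩ := M.dense_aux ⟨V, hVmu⟩ X hXV r h1 hrV
      exact ⟨Z, hZ1, hZ3⟩
  · intro Y hXY
    ext r
    simp only [Set.mem_setOf_eq, Set.mem_Icc]
    constructor
    · rintro ⟨Z, h1, h2, rfl⟩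
      exact ⟨M.rank_le_of_subset h1, M.rank_le_of_subset h2⟩
    · rintro ⟨h1, h2⟩
      exact M.dense_aux Y X hXY r h1 h2
end
end

section
/- Let κ be a regular cardinal and μ a (κ,κ⁺)-cardinal. Then every ordinal α < κ⁺ belongs to some X ∈ μ of rank zero. -/
open Set Cardinal Ordinal

noncomputable section

/-- Every element of `κ⁺` belongs to some element of `μ` of rank zero. -/
theorem mem_rank_zero (κ : Cardinal) (hκ : κ.IsRegular) (M : TwoCardinal κ)
    (α : Ordinal) (hα : α < (Order.succ κ).ord) :
    ∃ X : M.mu, M.rank X = 0 ∧ α ∈ (X : Set Ordinal) := by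
  have hcov : α ∈ ⋃₀ M.mu := by rw [M.covers]; exact hα
  obtain ⟨X₀, hX₀mu, hX₀α⟩ := hcov
  have hS : {X : M.mu | α ∈ (X : Set Ordinal)}.Nonempty := ⟨⟨X₀, hX₀mu⟩, hX₀α⟩
  obtain ⟨X, hXα, hmin⟩ := M.wf.has_min _ hS
  have hrank0 : (M.wf.apply X).rank = 0 := by
    by_contra h
    have hneat := M.neat X h
    have : α ∈ ⋃₀ {Z | Z ∈ M.mu ∧ Z ⊂ (X : Set Ordinal)} := by
      rw [← hneat]; exact hXα
    obtain ⟨Z, ⟨hZmu, hZX⟩, hαZ⟩ := this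
    exact hmin ⟨Z, hZmu⟩ hαZ hZX
  refine ⟨X, ?_, hXα⟩
  have : M.rank X = olower 0 := by rw [TwoCardinal.rank, hrank0]
  rw [this]
  apply le_antisymm _ zero_le
  exact csInf_le' (by simp [olower])
end
end
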